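/- Let r ≤ r̃ and let A₁, A₂ be real r̃×r̃ matrices with rank(A₁) = rank(A₂) = r, and let Â₁, Â₂ be real r̃×r̃ matrices with ‖Âᵢ − Aᵢ‖_F ≤ ε for i = 1,2. For i = 1,2 let Pᵢ be a best rank-r approximation of Âᵢ in spectral norm with rank(Pᵢ) = r. Let B, B̂ be real r̃×r̃ matrices with ‖B̂ − B‖_F ≤ ε and ‖B‖_F ≤ c_p. Suppose ‖Aᵢ†‖₂ ≤ c_{A†} and ‖Pᵢ†‖₂ ≤ c_{Â†} for i = 1,2. Then ‖P₁† B̂ (P₂†)ᵀ − A₁† B (A₂†)ᵀ‖_F ≤ (c_{Â†}² + 6 c_{A†} c_{Â†}² c_p + 6 c_{A†}² c_{Â†} c_p) · ε. Moreover, ‖A₁† B (A₂†)ᵀ‖_F ≤ c_{A†}² c_p. -/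

import Mathlib

open Matrix MeasureTheory ProbabilityTheory

noncomputable def specNorm {m n : ℕ} (A : Matrix (Fin m) (Fin n) ℝ) : ℝ :=
  ‖LinearMap.toContinuousLinearMap (Matrix.toEuclideanLin A)‖

noncomputable def frobNorm {m n : ℕ} (A : Matrix (Fin m) (Fin n) ℝ) : ℝ :=
  Real.sqrt (∑ i, ∑ j, (A i j) ^ 2)

/-- The column space (range) of a real matrix. -/
def colSpace {m n : ℕ} (A : Matrix (Fin m) (Fin n) ℝ) : Submodule ℝ (Fin m → ℝ) :=
  LinearMap.range A.mulVecLin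

/-- `G` is the Moore-Penrose pseudoinverse of `A`. -/
def IsMPInv {m n : ℕ} (A : Matrix (Fin m) (Fin n) ℝ) (G : Matrix (Fin n) (Fin m) ℝ) : Prop :=
  A * G * A = A ∧ G * A * G = G ∧ (A * G)ᵀ = A * G ∧ (G * A)ᵀ = G * A

section Spec
open scoped Matrix.Norms.L2Operator

lemma conjT {m n : ℕ} (A : Matrix (Fin m) (Fin n) ℝ) : Aᴴ = Aᵀ := by
  ext i j; simp [Matrix.conjTranspose_apply]

lemma snE {m n : ℕ} (A : Matrix (Fin m) (Fin n) ℝ) : specNorm A = ‖A‖ := rfl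

lemma sn_nonneg {m n : ℕ} (A : Matrix (Fin m) (Fin n) ℝ) : 0 ≤ specNorm A := by
  rw [snE]; exact norm_nonneg _

lemma sn_mul_le {n : ℕ} (A B : Matrix (Fin n) (Fin n) ℝ) :
    specNorm (A * B) ≤ specNorm A * specNorm B := by
  simp only [snE]; exact Matrix.l2_opNorm_mul A B

lemma sn_transpose {m n : ℕ} (A : Matrix (Fin m) (Fin n) ℝ) : specNorm Aᵀ = specNorm A := by
  simp only [snE]; rw [← conjT]; exact Matrix.l2_opNorm_conjTranspose A

lemma sn_neg {m n : ℕ} (A : Matrix (Fin m) (Fin n) ℝ) : specNorm (-A) = specNorm A := by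
  simp only [snE]; exact norm_neg A

lemma sn_add_le {m n : ℕ} (A B : Matrix (Fin m) (Fin n) ℝ) :
    specNorm (A + B) ≤ specNorm A + specNorm B := by
  simp only [snE]; exact norm_add_le A B

end Spec

section Frob

attribute [local instance] Matrix.frobeniusNormedAddCommGroup

lemma fnE {m n : ℕ} (A : Matrix (Fin m) (Fin n) ℝ) : frobNorm A = ‖A‖ := by
  rw [frobNorm, Matrix.frobenius_norm_def, ← Real.sqrt_eq_rpow]
  congr 1
  refine Finset.sum_congr rfl fun i _ => Finset.sum_congr rfl fun j _ => ?_
  rw [Real.rpow_two, Real.norm_eq_abs, sq_abs]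

lemma fn_nonneg {m n : ℕ} (A : Matrix (Fin m) (Fin n) ℝ) : 0 ≤ frobNorm A := by
  rw [fnE]; exact norm_nonneg _

lemma fn_add_le {m n : ℕ} (A B : Matrix (Fin m) (Fin n) ℝ) :
    frobNorm (A + B) ≤ frobNorm A + frobNorm B := by
  simp only [fnE]; exact norm_add_le A B

lemma fn_transpose {m n : ℕ} (A : Matrix (Fin m) (Fin n) ℝ) : frobNorm Aᵀ = frobNorm A := by
  simp only [fnE]; exact Matrix.frobenius_norm_transpose A

end Frob

lemma fn_sq {m n : ℕ} (A : Matrix (Fin m) (Fin n) ℝ) :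
    frobNorm A ^ 2 = ∑ i, ∑ j, (A i j) ^ 2 := by
  rw [frobNorm, Real.sq_sqrt]; positivity

lemma euclid_norm_sq {n : ℕ} (x : EuclideanSpace ℝ (Fin n)) :
    ‖x‖ ^ 2 = ∑ i, (x i) ^ 2 := by
  rw [EuclideanSpace.norm_eq, Real.sq_sqrt (by positivity)]
  exact Finset.sum_congr rfl fun i _ => by rw [Real.norm_eq_abs, sq_abs]

lemma clm_apply {m n : ℕ} (A : Matrix (Fin m) (Fin n) ℝ) (x : EuclideanSpace ℝ (Fin n)) (i : Fin m) :
    (LinearMap.toContinuousLinearMap (Matrix.toEuclideanLin A) x) i = (A *ᵥ (fun j => x j)) i := rfl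

lemma clm_norm_apply_le {m n : ℕ} (A : Matrix (Fin m) (Fin n) ℝ) (x : EuclideanSpace ℝ (Fin n)) :
    ‖LinearMap.toContinuousLinearMap (Matrix.toEuclideanLin A) x‖ ≤ specNorm A * ‖x‖ :=
  ContinuousLinearMap.le_opNorm _ x

lemma tel_norm_le {m n : ℕ} (A : Matrix (Fin m) (Fin n) ℝ) (x : EuclideanSpace ℝ (Fin n)) :
    ‖Matrix.toEuclideanLin A x‖ ≤ specNorm A * ‖x‖ :=
  clm_norm_apply_le A x

lemma sn_le_fn {m n : ℕ} (A : Matrix (Fin m) (Fin n) ℝ) : specNorm A ≤ frobNorm A := by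
  refine ContinuousLinearMap.opNorm_le_bound _ (fn_nonneg A) fun x => ?_
  set T := LinearMap.toContinuousLinearMap (Matrix.toEuclideanLin A)
  have h2 : ‖T x‖ ^ 2 ≤ (frobNorm A) ^ 2 * ‖x‖ ^ 2 := by
    rw [euclid_norm_sq, fn_sq, euclid_norm_sq, Finset.sum_mul]
    refine Finset.sum_le_sum fun i _ => ?_
    have := Finset.sum_mul_sq_le_sq_mul_sq Finset.univ (fun j => A i j) (fun j => x j)
    calc (T x i) ^ 2 = (∑ j, A i j * x j) ^ 2 := by rw [clm_apply]; rfl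
      _ ≤ (∑ j, (A i j) ^ 2) * ∑ j, (x j) ^ 2 := this
  nlinarith [norm_nonneg (T x), fn_nonneg A, norm_nonneg x, mul_nonneg (fn_nonneg A) (norm_nonneg x)]

lemma fn_mul_sn {m n k : ℕ} (A : Matrix (Fin m) (Fin n) ℝ) (B : Matrix (Fin n) (Fin k) ℝ) :
    frobNorm (A * B) ≤ specNorm A * frobNorm B := by
  have sn0 := sn_nonneg A
  have h2 : frobNorm (A * B) ^ 2 ≤ (specNorm A * frobNorm B) ^ 2 := by
    have e1 : frobNorm (A * B) ^ 2 = ∑ j, ∑ i, ((A * B) i j) ^ 2 := by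
      rw [fn_sq]; exact Finset.sum_comm
    have e2 : (specNorm A * frobNorm B) ^ 2 = ∑ j, specNorm A ^ 2 * ∑ l, (B l j) ^ 2 := by
      rw [mul_pow, fn_sq, ← Finset.mul_sum]
      congr 1
      exact Finset.sum_comm
    rw [e1, e2]
    refine Finset.sum_le_sum fun j _ => ?_
    set x : EuclideanSpace ℝ (Fin n) := (WithLp.equiv 2 _).symm (fun l => B l j) with hx
    have hTx : ∀ i, (A * B) i j = (LinearMap.toContinuousLinearMap (Matrix.toEuclideanLin A) x) i := by
      intro i
      rw [clm_apply]
      simp [Matrix.mul_apply, Matrix.mulVec, dotProduct, hx]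
    calc ∑ i, ((A * B) i j) ^ 2 = ‖LinearMap.toContinuousLinearMap (Matrix.toEuclideanLin A) x‖ ^ 2 := by
          rw [euclid_norm_sq]
          exact Finset.sum_congr rfl fun i _ => by rw [hTx i]
      _ ≤ (specNorm A * ‖x‖) ^ 2 := by
          have := clm_norm_apply_le A x
          have h0 : (0:ℝ) ≤ ‖LinearMap.toContinuousLinearMap (Matrix.toEuclideanLin A) x‖ := norm_nonneg _
          nlinarith [mul_nonneg sn0 (norm_nonneg x)]
      _ = specNorm A ^ 2 * ∑ l, (B l j) ^ 2 := by
          rw [mul_pow, euclid_norm_sq]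
          rfl
  nlinarith [fn_nonneg (A * B), mul_nonneg sn0 (fn_nonneg B), h2]

lemma fn_sn_mul {m n k : ℕ} (A : Matrix (Fin m) (Fin n) ℝ) (B : Matrix (Fin n) (Fin k) ℝ) :
    frobNorm (A * B) ≤ frobNorm A * specNorm B := by
  calc frobNorm (A * B) = frobNorm ((A * B)ᵀ) := (fn_transpose _).symm
    _ = frobNorm (Bᵀ * Aᵀ) := by rw [Matrix.transpose_mul]
    _ ≤ specNorm Bᵀ * frobNorm Aᵀ := fn_mul_sn _ _
    _ = frobNorm A * specNorm B := by rw [sn_transpose, fn_transpose]; ring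
open scoped RealInnerProductSpace

open Matrix in
lemma tel_mul {l m n : ℕ} (A : Matrix (Fin l) (Fin m) ℝ) (B : Matrix (Fin m) (Fin n) ℝ)
    (x : EuclideanSpace ℝ (Fin n)) :
    Matrix.toEuclideanLin (A * B) x = Matrix.toEuclideanLin A (Matrix.toEuclideanLin B x) := by
  rw [Matrix.toEuclideanLin_eq_toLin,
    Matrix.toLin_mul _ (PiLp.basisFun 2 ℝ (Fin m)) _]
  rfl

lemma inner_tel {m n : ℕ} (A : Matrix (Fin m) (Fin n) ℝ) (x : EuclideanSpace ℝ (Fin n))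
    (y : EuclideanSpace ℝ (Fin m)) :
    (inner ℝ (Matrix.toEuclideanLin A x) (y) : ℝ) = (inner ℝ (x) (Matrix.toEuclideanLin Aᵀ y) : ℝ) := by
  rw [← conjT, Matrix.toEuclideanLin_conjTranspose_eq_adjoint]
  exact (LinearMap.adjoint_inner_right _ _ _).symm

lemma sn_proj_le_one {n : ℕ} (P : Matrix (Fin n) (Fin n) ℝ) (hs : Pᵀ = P) (hi : P * P = P) :
    specNorm P ≤ 1 := by
  refine ContinuousLinearMap.opNorm_le_bound _ zero_le_one fun x => ?_
  rw [one_mul]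
  have hx : (LinearMap.toContinuousLinearMap (Matrix.toEuclideanLin P)) x
      = Matrix.toEuclideanLin P x := rfl
  rw [hx]
  set v := Matrix.toEuclideanLin P x with hv
  have h1 : ‖v‖ ^ 2 = (inner ℝ (x) (v) : ℝ) := by
    rw [← real_inner_self_eq_norm_sq]
    calc (inner ℝ (v) (v) : ℝ) = (inner ℝ (x) (Matrix.toEuclideanLin Pᵀ v) : ℝ) := inner_tel P x v
      _ = (inner ℝ (x) (Matrix.toEuclideanLin P (Matrix.toEuclideanLin P x)) : ℝ) := by rw [hs, hv]
      _ = (inner ℝ (x) (Matrix.toEuclideanLin (P * P) x) : ℝ) := by rw [tel_mul]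
      _ = (inner ℝ (x) (v) : ℝ) := by rw [hi, hv]
  have h2 : (inner ℝ (x) (v) : ℝ) ≤ ‖x‖ * ‖v‖ := real_inner_le_norm x v
  nlinarith [norm_nonneg v, norm_nonneg x]

lemma mem_range_tel {n : ℕ} (P : Matrix (Fin n) (Fin n) ℝ) (hi : P * P = P)
    (x : EuclideanSpace ℝ (Fin n)) :
    x ∈ LinearMap.range (Matrix.toEuclideanLin P) ↔ Matrix.toEuclideanLin P x = x := by
  constructor
  · rintro ⟨y, rfl⟩
    rw [← tel_mul, hi]
  · intro h
    exact ⟨x, h⟩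

lemma finrank_range_tel {m n : ℕ} (A : Matrix (Fin m) (Fin n) ℝ) :
    Module.finrank ℝ (LinearMap.range (Matrix.toEuclideanLin A)) = A.rank := by
  have h : LinearMap.range (Matrix.toEuclideanLin A)
      = Submodule.map ((WithLp.linearEquiv 2 ℝ (Fin m → ℝ)).symm : (Fin m → ℝ) →ₗ[ℝ] EuclideanSpace ℝ (Fin m))
          (LinearMap.range A.mulVecLin) := by
    ext x
    simp only [LinearMap.mem_range, Submodule.mem_map]
    constructor
    · rintro ⟨y, rfl⟩
      exact ⟨A *ᵥ (WithLp.equiv 2 _ y), ⟨(WithLp.equiv 2 _) y, rfl⟩, rfl⟩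
    · rintro ⟨z, ⟨y, rfl⟩, rfl⟩
      exact ⟨(WithLp.equiv 2 _).symm y, rfl⟩
  rw [h, Matrix.rank]
  exact LinearEquiv.finrank_map_eq _ _

lemma tel_one {n : ℕ} (x : EuclideanSpace ℝ (Fin n)) :
    Matrix.toEuclideanLin (1 : Matrix (Fin n) (Fin n) ℝ) x = x := by
  apply (WithLp.equiv 2 _).injective
  simp [Matrix.toEuclideanLin_apply, Matrix.one_mulVec]

lemma tel_one_sub {n : ℕ} (P : Matrix (Fin n) (Fin n) ℝ) (x : EuclideanSpace ℝ (Fin n)) :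
    Matrix.toEuclideanLin (1 - P) x = x - Matrix.toEuclideanLin P x := by
  rw [map_sub, LinearMap.sub_apply, tel_one]

lemma proj_pyth {n : ℕ} (Q : Matrix (Fin n) (Fin n) ℝ) (hQs : Qᵀ = Q) (hQi : Q * Q = Q)
    (u : EuclideanSpace ℝ (Fin n)) :
    ‖u - Matrix.toEuclideanLin Q u‖ ^ 2 = ‖u‖ ^ 2 - ‖Matrix.toEuclideanLin Q u‖ ^ 2 := by
  have hqq : (inner ℝ u (Matrix.toEuclideanLin Q u) : ℝ) = ‖Matrix.toEuclideanLin Q u‖ ^ 2 := by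
    rw [← real_inner_self_eq_norm_sq]
    refine Eq.symm ?_
    calc (inner ℝ (Matrix.toEuclideanLin Q u) (Matrix.toEuclideanLin Q u) : ℝ)
        = (inner ℝ u (Matrix.toEuclideanLin Qᵀ (Matrix.toEuclideanLin Q u)) : ℝ) := inner_tel _ _ _
      _ = (inner ℝ u (Matrix.toEuclideanLin (Q * Q) u) : ℝ) := by rw [hQs, tel_mul]
      _ = (inner ℝ u (Matrix.toEuclideanLin Q u) : ℝ) := by rw [hQi]
  have hexp := norm_sub_sq_real u (Matrix.toEuclideanLin Q u)
  rw [hexp, hqq]; ring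

set_option maxHeartbeats 2000000 in
lemma proj_le {n : ℕ} (P Q : Matrix (Fin n) (Fin n) ℝ) (hPs : Pᵀ = P) (hPi : P * P = P)
    (hQs : Qᵀ = Q) (hQi : Q * Q = Q) (hrk : P.rank = Q.rank) :
    specNorm (P * (1 - Q)) ≤ specNorm (Q * (1 - P)) := by
  have h1Qs : (1 - Q)ᵀ = 1 - Q := by rw [Matrix.transpose_sub, Matrix.transpose_one, hQs]
  have h1Qi : (1 - Q) * (1 - Q) = 1 - Q := by
    rw [Matrix.mul_sub, Matrix.mul_one, Matrix.sub_mul, Matrix.one_mul, hQi, sub_self, sub_zero]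
  have h1Ps : (1 - P)ᵀ = 1 - P := by rw [Matrix.transpose_sub, Matrix.transpose_one, hPs]
  have hseq : specNorm (Q * (1 - P)) = specNorm ((1 - P) * Q) := by
    rw [show Q * (1 - P) = ((1 - P) * Q)ᵀ by rw [Matrix.transpose_mul, h1Ps, hQs], sn_transpose]
  have hgoal : specNorm (P * (1 - Q)) = specNorm ((1 - Q) * P) := by
    rw [show P * (1 - Q) = ((1 - Q) * P)ᵀ by rw [Matrix.transpose_mul, h1Qs, hPs], sn_transpose]
  set s := specNorm (Q * (1 - P)) with hsdef
  have hs0 : 0 ≤ s := sn_nonneg _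
  by_cases hs1 : 1 ≤ s
  · calc specNorm (P * (1 - Q)) ≤ specNorm P * specNorm (1 - Q) := sn_mul_le _ _
      _ ≤ 1 * 1 :=
        mul_le_mul (sn_proj_le_one P hPs hPi) (sn_proj_le_one _ h1Qs h1Qi) (sn_nonneg _) zero_le_one
      _ ≤ s := by linarith
  · push_neg at hs1
    have claim1 : ∀ w : EuclideanSpace ℝ (Fin n), Matrix.toEuclideanLin Q w = w →
        ‖w - Matrix.toEuclideanLin P w‖ ≤ s * ‖w‖ := by
      intro w hw
      have he : Matrix.toEuclideanLin ((1 - P) * Q) w = w - Matrix.toEuclideanLin P w := by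
        rw [tel_mul, hw, tel_one_sub]
      calc ‖w - Matrix.toEuclideanLin P w‖ = ‖Matrix.toEuclideanLin ((1 - P) * Q) w‖ := by rw [he]
        _ ≤ specNorm ((1 - P) * Q) * ‖w‖ := tel_norm_le _ _
        _ = s * ‖w‖ := by rw [← hseq]
    set c := Real.sqrt (1 - s ^ 2) with hcdef
    have hc2 : c ^ 2 = 1 - s ^ 2 := Real.sq_sqrt (by nlinarith)
    have hc0 : 0 < c := Real.sqrt_pos.mpr (by nlinarith)
    have claim2 : ∀ w : EuclideanSpace ℝ (Fin n), Matrix.toEuclideanLin Q w = w →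
        c ^ 2 * ‖w‖ ^ 2 ≤ ‖Matrix.toEuclideanLin P w‖ ^ 2 := by
      intro w hw
      have h1 := proj_pyth P hPs hPi w
      have h2 : ‖w - Matrix.toEuclideanLin P w‖ ^ 2 ≤ (s * ‖w‖) ^ 2 :=
        pow_le_pow_left₀ (norm_nonneg _) (claim1 w hw) 2
      rw [hc2]; nlinarith
    set V := LinearMap.range (Matrix.toEuclideanLin P) with hV
    set W := LinearMap.range (Matrix.toEuclideanLin Q) with hW
    have hfr : Module.finrank ℝ W = Module.finrank ℝ V := by
      rw [hV, hW, finrank_range_tel, finrank_range_tel, hrk]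
    have hgmem : ∀ x ∈ W, Matrix.toEuclideanLin P x ∈ V := fun x _ => ⟨x, rfl⟩
    set g : W →ₗ[ℝ] V := (Matrix.toEuclideanLin P).restrict hgmem with hg
    have hg_coe : ∀ w : W, (g w : EuclideanSpace ℝ (Fin n)) = Matrix.toEuclideanLin P (w : _) :=
      fun w => rfl
    have hg_low : ∀ w : W, c * ‖w‖ ≤ ‖g w‖ := by
      intro w
      have hw : Matrix.toEuclideanLin Q (w : EuclideanSpace ℝ (Fin n)) = w :=
        (mem_range_tel Q hQi _).mp w.2
      have h2 := claim2 w hw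
      have hn : ‖g w‖ = ‖Matrix.toEuclideanLin P (w : EuclideanSpace ℝ (Fin n))‖ := by
        rw [Submodule.coe_norm, hg_coe]
      have hnw : ‖w‖ = ‖(w : EuclideanSpace ℝ (Fin n))‖ := Submodule.coe_norm w
      rw [hn, hnw]
      nlinarith [norm_nonneg (Matrix.toEuclideanLin P (w : EuclideanSpace ℝ (Fin n))),
        mul_nonneg hc0.le (norm_nonneg (w : EuclideanSpace ℝ (Fin n)))]
    have hginj : Function.Injective g := by
      intro a b hab
      have h := hg_low (a - b)
      rw [map_sub, hab, sub_self, norm_zero] at h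
      have h2 : c * ‖a - b‖ ≤ c * 0 := by simpa using h
      have h3 : ‖a - b‖ ≤ 0 := le_of_mul_le_mul_left h2 hc0
      exact sub_eq_zero.mp (norm_le_zero_iff.mp h3)
    have hgsurj : Function.Surjective g :=
      (LinearMap.injective_iff_surjective_of_finrank_eq_finrank hfr).mp hginj
    have hfmem : ∀ x ∈ V, Matrix.toEuclideanLin Q x ∈ W := fun x _ => ⟨x, rfl⟩
    set f : V →ₗ[ℝ] W := (Matrix.toEuclideanLin Q).restrict hfmem with hf
    have hf_coe : ∀ v : V, (f v : EuclideanSpace ℝ (Fin n)) = Matrix.toEuclideanLin Q (v : _) :=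
      fun v => rfl
    have hadj : f = LinearMap.adjoint g := by
      rw [LinearMap.eq_adjoint_iff]
      intro x y
      have hx : Matrix.toEuclideanLin P (x : EuclideanSpace ℝ (Fin n)) = x :=
        (mem_range_tel P hPi _).mp x.2
      have hy : Matrix.toEuclideanLin Q (y : EuclideanSpace ℝ (Fin n)) = y :=
        (mem_range_tel Q hQi _).mp y.2
      rw [Submodule.coe_inner, Submodule.coe_inner, hf_coe, hg_coe]
      calc (inner ℝ (Matrix.toEuclideanLin Q (x : EuclideanSpace ℝ (Fin n))) ((y : EuclideanSpace ℝ (Fin n))) : ℝ)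
          = (inner ℝ (x : EuclideanSpace ℝ (Fin n)) (Matrix.toEuclideanLin Qᵀ (y : EuclideanSpace ℝ (Fin n))) : ℝ) :=
            inner_tel _ _ _
        _ = (inner ℝ (x : EuclideanSpace ℝ (Fin n)) ((y : EuclideanSpace ℝ (Fin n))) : ℝ) := by
            rw [hQs, hy]
        _ = (inner ℝ (x : EuclideanSpace ℝ (Fin n)) (Matrix.toEuclideanLin P (y : EuclideanSpace ℝ (Fin n))) : ℝ) := by
            have h := inner_tel P (y : EuclideanSpace ℝ (Fin n)) (x : EuclideanSpace ℝ (Fin n))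
            rw [hPs, hx] at h
            conv_rhs => rw [real_inner_comm, h]
            exact real_inner_comm _ _
    have hf_low : ∀ v : V, c * ‖v‖ ≤ ‖f v‖ := by
      intro v
      rcases hgsurj v with ⟨w, hw⟩
      by_cases hv0 : v = 0
      · simp [hv0, map_zero]
      · have hnv : 0 < ‖v‖ := norm_pos_iff.mpr hv0
        have h1 : (inner ℝ (f v) w : ℝ) = ‖v‖ ^ 2 := by
          rw [hadj, LinearMap.adjoint_inner_left, hw, real_inner_self_eq_norm_sq]
        have h2 : (inner ℝ (f v) w : ℝ) ≤ ‖f v‖ * ‖w‖ := real_inner_le_norm _ _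
        have h3 : c * ‖w‖ ≤ ‖v‖ := by rw [← hw]; exact hg_low w
        nlinarith [norm_nonneg (f v), norm_nonneg w]
    have claim3 : ∀ u : EuclideanSpace ℝ (Fin n), Matrix.toEuclideanLin P u = u →
        ‖u - Matrix.toEuclideanLin Q u‖ ≤ s * ‖u‖ := by
      intro u hu
      set v : V := ⟨u, ⟨u, hu⟩⟩ with hv
      have h1 : ‖Matrix.toEuclideanLin Q u‖ = ‖f v‖ := by
        rw [Submodule.coe_norm, hf_coe]
      have h2 := hf_low v
      have h3 : ‖v‖ = ‖u‖ := Submodule.coe_norm v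
      have h4 := proj_pyth Q hQs hQi u
      have h5 : c * ‖u‖ ≤ ‖Matrix.toEuclideanLin Q u‖ := by rw [h1]; rw [h3] at h2; exact h2
      have h6 : 0 ≤ ‖u - Matrix.toEuclideanLin Q u‖ := norm_nonneg _
      nlinarith [norm_nonneg u, mul_nonneg hs0 (norm_nonneg u), mul_nonneg hc0.le (norm_nonneg u)]
    rw [hgoal]
    refine ContinuousLinearMap.opNorm_le_bound _ hs0 fun x => ?_
    show ‖Matrix.toEuclideanLin ((1 - Q) * P) x‖ ≤ s * ‖x‖
    rw [tel_mul, tel_one_sub]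
    set u := Matrix.toEuclideanLin P x with hu'
    have hu : Matrix.toEuclideanLin P u = u := by rw [hu', ← tel_mul, hPi]
    have hux : ‖u‖ ≤ ‖x‖ := by
      have h1 := tel_norm_le P x
      have h2 := sn_proj_le_one P hPs hPi
      nlinarith [norm_nonneg x]
    calc ‖u - Matrix.toEuclideanLin Q u‖ ≤ s * ‖u‖ := claim3 u hu
      _ ≤ s * ‖x‖ := mul_le_mul_of_nonneg_left hux hs0

lemma mul3_le {a b c a' b' c' : ℝ} (ha : a ≤ a') (hb : b ≤ b') (hc : c ≤ c')
    (ha0 : 0 ≤ a) (hb0 : 0 ≤ b) (hc0 : 0 ≤ c) (ha'0 : 0 ≤ a') (hb'0 : 0 ≤ b') :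
    a * b * c ≤ a' * b' * c' :=
  mul_le_mul (mul_le_mul ha hb hb0 ha'0) hc hc0 (mul_nonneg ha'0 hb'0)

lemma sn_mul3_le {n : ℕ} (X Y Z : Matrix (Fin n) (Fin n) ℝ) :
    specNorm (X * Y * Z) ≤ specNorm X * specNorm Y * specNorm Z := by
  calc specNorm (X * Y * Z) ≤ specNorm (X * Y) * specNorm Z := sn_mul_le _ _
    _ ≤ specNorm X * specNorm Y * specNorm Z :=
      mul_le_mul_of_nonneg_right (sn_mul_le _ _) (sn_nonneg _)

lemma fn_mul3_le {n : ℕ} (X Y Z : Matrix (Fin n) (Fin n) ℝ) :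
    frobNorm (X * Y * Z) ≤ specNorm X * frobNorm Y * specNorm Z := by
  calc frobNorm (X * Y * Z) ≤ frobNorm (X * Y) * specNorm Z := fn_sn_mul _ _
    _ ≤ specNorm X * frobNorm Y * specNorm Z :=
      mul_le_mul_of_nonneg_right (fn_mul_sn _ _) (sn_nonneg _)

lemma pinv_perturb {n : ℕ} (A B G H : Matrix (Fin n) (Fin n) ℝ)
    (hG : IsMPInv A G) (hH : IsMPInv B H) (hrk : A.rank = B.rank) :
    specNorm (H - G) ≤ 3 * (specNorm G * specNorm H * specNorm (B - A)) := by
  obtain ⟨hA1, hG1, hAGs, hGAs⟩ := hG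
  obtain ⟨hB1, hH1, hBHs, hHBs⟩ := hH
  -- projections
  have hAGi : (A * G) * (A * G) = A * G := by
    have h : (A * G) * (A * G) = (A * G * A) * G := by noncomm_ring
    rw [h, hA1]
  have hBHi : (B * H) * (B * H) = B * H := by
    have h : (B * H) * (B * H) = (B * H * B) * H := by noncomm_ring
    rw [h, hB1]
  have hGAi : (G * A) * (G * A) = G * A := by
    have h : (G * A) * (G * A) = (G * A * G) * A := by noncomm_ring
    rw [h, hG1]
  have hHBi : (H * B) * (H * B) = H * B := by
    have h : (H * B) * (H * B) = (H * B * H) * B := by noncomm_ring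
    rw [h, hH1]
  -- ranks
  have hrAG : (A * G).rank = A.rank := by
    refine le_antisymm (Matrix.rank_mul_le_left A G) ?_
    calc A.rank = (A * G * A).rank := by rw [hA1]
      _ ≤ (A * G).rank := Matrix.rank_mul_le_left (A * G) A
  have hrBH : (B * H).rank = B.rank := by
    refine le_antisymm (Matrix.rank_mul_le_left B H) ?_
    calc B.rank = (B * H * B).rank := by rw [hB1]
      _ ≤ (B * H).rank := Matrix.rank_mul_le_left (B * H) B
  have hrGA : (G * A).rank = A.rank := by
    refine le_antisymm (Matrix.rank_mul_le_right G A) ?_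
    calc A.rank = (A * (G * A)).rank := by rw [← Matrix.mul_assoc, hA1]
      _ ≤ (G * A).rank := Matrix.rank_mul_le_right A (G * A)
  have hrHB : (H * B).rank = B.rank := by
    refine le_antisymm (Matrix.rank_mul_le_right H B) ?_
    calc B.rank = (B * (H * B)).rank := by rw [← Matrix.mul_assoc, hB1]
      _ ≤ (H * B).rank := Matrix.rank_mul_le_right B (H * B)
  have h1BHs : (1 - B * H)ᵀ = 1 - B * H := by
    rw [Matrix.transpose_sub, Matrix.transpose_one, hBHs]
  have h1BHi : (1 - B * H) * (1 - B * H) = 1 - B * H := by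
    rw [Matrix.mul_sub, Matrix.mul_one, Matrix.sub_mul, Matrix.one_mul, hBHi, sub_self, sub_zero]
  have h1GAs : (1 - G * A)ᵀ = 1 - G * A := by
    rw [Matrix.transpose_sub, Matrix.transpose_one, hGAs]
  have h1GAi : (1 - G * A) * (1 - G * A) = 1 - G * A := by
    rw [Matrix.mul_sub, Matrix.mul_one, Matrix.sub_mul, Matrix.one_mul, hGAi, sub_self, sub_zero]
  -- term 1
  have hT1 : specNorm (H * (B - A) * G) ≤ specNorm G * specNorm H * specNorm (B - A) := by
    have := sn_mul3_le H (B - A) G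
    nlinarith [sn_nonneg H, sn_nonneg (B - A), sn_nonneg G]
  -- term 2
  have hT2 : specNorm (H * (1 - A * G)) ≤ specNorm G * specNorm H * specNorm (B - A) := by
    have e2 : H * (1 - A * G) = H * (B * H * (1 - A * G)) := by
      have h : (H * B * H) * (1 - A * G) = H * (B * H * (1 - A * G)) := by noncomm_ring
      rw [← h, hH1]
    have hBt : Bᵀ * (1 - B * H) = 0 := by
      have h1 : Bᵀ * (1 - B * H) = Bᵀ - Bᵀ * (B * H) := by noncomm_ring
      rw [h1, ← hBHs, ← Matrix.transpose_mul, Matrix.mul_assoc, ← Matrix.mul_assoc, hB1, sub_self]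
    have e3 : (A * G) * (1 - B * H) = -(Gᵀ * (B - A)ᵀ * (1 - B * H)) := by
      have h2 : Gᵀ * (B - A)ᵀ * (1 - B * H)
          = Gᵀ * (Bᵀ * (1 - B * H)) - (Gᵀ * Aᵀ) * (1 - B * H) := by
        rw [Matrix.transpose_sub]; noncomm_ring
      rw [h2, hBt, Matrix.mul_zero, ← Matrix.transpose_mul, hAGs]
      noncomm_ring
    have hproj := proj_le (B * H) (A * G) hBHs hBHi hAGs hAGi
      (by rw [hrBH, hrAG, hrk])
    have hb1 : specNorm ((A * G) * (1 - B * H)) ≤ specNorm G * specNorm (B - A) := by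
      rw [e3, sn_neg]
      calc specNorm (Gᵀ * (B - A)ᵀ * (1 - B * H))
          ≤ specNorm Gᵀ * specNorm (B - A)ᵀ * specNorm (1 - B * H) := sn_mul3_le _ _ _
        _ ≤ specNorm Gᵀ * specNorm (B - A)ᵀ * 1 := by
            refine mul_le_mul_of_nonneg_left (sn_proj_le_one _ h1BHs h1BHi) ?_
            exact mul_nonneg (sn_nonneg _) (sn_nonneg _)
        _ = specNorm G * specNorm (B - A) := by rw [mul_one, sn_transpose, sn_transpose]
    calc specNorm (H * (1 - A * G)) = specNorm (H * (B * H * (1 - A * G))) := by rw [← e2]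
      _ ≤ specNorm H * specNorm ((B * H) * (1 - A * G)) := by
          have := sn_mul_le H (B * H * (1 - A * G))
          rw [Matrix.mul_assoc] at this ⊢
          exact this
      _ ≤ specNorm H * specNorm ((A * G) * (1 - B * H)) :=
          mul_le_mul_of_nonneg_left hproj (sn_nonneg _)
      _ ≤ specNorm H * (specNorm G * specNorm (B - A)) :=
          mul_le_mul_of_nonneg_left hb1 (sn_nonneg _)
      _ = specNorm G * specNorm H * specNorm (B - A) := by ring
  -- term 3
  have hT3 : specNorm ((1 - H * B) * G) ≤ specNorm G * specNorm H * specNorm (B - A) := by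
    have e4 : (1 - H * B) * G = ((1 - H * B) * (G * A)) * G := by
      have h : (1 - H * B) * (G * A * G) = ((1 - H * B) * (G * A)) * G := by noncomm_ring
      rw [← h, hG1]
    have hAt : A * (1 - G * A) = 0 := by
      have h : A * (1 - G * A) = A - A * G * A := by noncomm_ring
      rw [h, hA1, sub_self]
    have e5 : (H * B) * (1 - G * A) = H * ((B - A) * (1 - G * A)) := by
      have h : (H * B) * (1 - G * A) = H * ((B - A) * (1 - G * A)) + H * (A * (1 - G * A)) := by
        noncomm_ring
      rw [h, hAt, Matrix.mul_zero, add_zero]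
    have hproj := proj_le (G * A) (H * B) hGAs hGAi hHBs hHBi
      (by rw [hrGA, hrHB, hrk])
    have hb2 : specNorm ((H * B) * (1 - G * A)) ≤ specNorm H * specNorm (B - A) := by
      rw [e5]
      calc specNorm (H * ((B - A) * (1 - G * A)))
          ≤ specNorm H * specNorm ((B - A) * (1 - G * A)) := sn_mul_le _ _
        _ ≤ specNorm H * (specNorm (B - A) * specNorm (1 - G * A)) :=
            mul_le_mul_of_nonneg_left (sn_mul_le _ _) (sn_nonneg _)
        _ ≤ specNorm H * (specNorm (B - A) * 1) := by
            refine mul_le_mul_of_nonneg_left ?_ (sn_nonneg _)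
            exact mul_le_mul_of_nonneg_left (sn_proj_le_one _ h1GAs h1GAi) (sn_nonneg _)
        _ = specNorm H * specNorm (B - A) := by rw [mul_one]
    have hb3 : specNorm ((1 - H * B) * (G * A)) ≤ specNorm H * specNorm (B - A) := by
      have ht : specNorm ((1 - H * B) * (G * A)) = specNorm ((G * A) * (1 - H * B)) := by
        rw [show (G * A) * (1 - H * B) = ((1 - H * B) * (G * A))ᵀ by
          rw [Matrix.transpose_mul, hGAs, Matrix.transpose_sub, Matrix.transpose_one, hHBs],
          sn_transpose]
      rw [ht]
      exact le_trans hproj hb2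
    calc specNorm ((1 - H * B) * G) = specNorm (((1 - H * B) * (G * A)) * G) := by rw [← e4]
      _ ≤ specNorm ((1 - H * B) * (G * A)) * specNorm G := sn_mul_le _ _
      _ ≤ (specNorm H * specNorm (B - A)) * specNorm G :=
          mul_le_mul_of_nonneg_right hb3 (sn_nonneg _)
      _ = specNorm G * specNorm H * specNorm (B - A) := by ring
  -- combine
  have hid : H - G = -(H * (B - A) * G) + H * (1 - A * G) - (1 - H * B) * G := by noncomm_ring
  calc specNorm (H - G)
      = specNorm (-(H * (B - A) * G) + H * (1 - A * G) - (1 - H * B) * G) := by rw [← hid]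
    _ ≤ specNorm (-(H * (B - A) * G) + H * (1 - A * G)) + specNorm (-((1 - H * B) * G)) := by
        rw [sub_eq_add_neg]; exact sn_add_le _ _
    _ ≤ specNorm (-(H * (B - A) * G)) + specNorm (H * (1 - A * G)) + specNorm ((1 - H * B) * G) := by
        rw [sn_neg ((1 - H * B) * G)]
        exact add_le_add_left (sn_add_le _ _) _
    _ = specNorm (H * (B - A) * G) + specNorm (H * (1 - A * G)) + specNorm ((1 - H * B) * G) := by
        rw [sn_neg]
    _ ≤ 3 * (specNorm G * specNorm H * specNorm (B - A)) := by linarith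

theorem stmt9 {r rt : ℕ} (hr : r ≤ rt) (ε cp cA cP : ℝ)
    (A₁ A₂ Ah₁ Ah₂ P₁ P₂ B Bh : Matrix (Fin rt) (Fin rt) ℝ)
    (hrA₁ : A₁.rank = r) (hrA₂ : A₂.rank = r)
    (hA1e : frobNorm (Ah₁ - A₁) ≤ ε) (hA2e : frobNorm (Ah₂ - A₂) ≤ ε)
    (hP₁r : P₁.rank = r) (hP₂r : P₂.rank = r)
    (hP₁best : ∀ M : Matrix (Fin rt) (Fin rt) ℝ, M.rank ≤ r →
      specNorm (Ah₁ - P₁) ≤ specNorm (Ah₁ - M))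
    (hP₂best : ∀ M : Matrix (Fin rt) (Fin rt) ℝ, M.rank ≤ r →
      specNorm (Ah₂ - P₂) ≤ specNorm (Ah₂ - M))
    (hBe : frobNorm (Bh - B) ≤ ε) (hBn : frobNorm B ≤ cp)
    (A₁d A₂d P₁d P₂d : Matrix (Fin rt) (Fin rt) ℝ)
    (hA₁d : IsMPInv A₁ A₁d) (hA₂d : IsMPInv A₂ A₂d)
    (hP₁d : IsMPInv P₁ P₁d) (hP₂d : IsMPInv P₂ P₂d)
    (hcA1 : specNorm A₁d ≤ cA) (hcA2 : specNorm A₂d ≤ cA)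
    (hcP1 : specNorm P₁d ≤ cP) (hcP2 : specNorm P₂d ≤ cP) :
    frobNorm (P₁d * Bh * P₂dᵀ - A₁d * B * A₂dᵀ) ≤
      (cP ^ 2 + 6 * cA * cP ^ 2 * cp + 6 * cA ^ 2 * cP * cp) * ε ∧
    frobNorm (A₁d * B * A₂dᵀ) ≤ cA ^ 2 * cp := by
  have hε0 : 0 ≤ ε := le_trans (fn_nonneg _) hA1e
  have hcp0 : 0 ≤ cp := le_trans (fn_nonneg _) hBn
  have hcA0 : 0 ≤ cA := le_trans (sn_nonneg _) hcA1
  have hcP0 : 0 ≤ cP := le_trans (sn_nonneg _) hcP1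
  -- spectral perturbation of P_i from A_i
  have hsp : ∀ (Ah Ai Pi : Matrix (Fin rt) (Fin rt) ℝ), Ai.rank = r →
      frobNorm (Ah - Ai) ≤ ε →
      (∀ M : Matrix (Fin rt) (Fin rt) ℝ, M.rank ≤ r → specNorm (Ah - Pi) ≤ specNorm (Ah - M)) →
      specNorm (Pi - Ai) ≤ 2 * ε := by
    intro Ah Ai Pi hrAi hfe hbest
    have h1 : specNorm (Ah - Ai) ≤ ε := le_trans (sn_le_fn _) hfe
    have h2 : specNorm (Ah - Pi) ≤ ε := le_trans (hbest Ai (le_of_eq hrAi)) h1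
    have h3 : Pi - Ai = -(Ah - Pi) + (Ah - Ai) := by abel
    calc specNorm (Pi - Ai) = specNorm (-(Ah - Pi) + (Ah - Ai)) := by rw [← h3]
      _ ≤ specNorm (-(Ah - Pi)) + specNorm (Ah - Ai) := sn_add_le _ _
      _ = specNorm (Ah - Pi) + specNorm (Ah - Ai) := by rw [sn_neg]
      _ ≤ 2 * ε := by linarith
  have hsp1 : specNorm (P₁ - A₁) ≤ 2 * ε := hsp Ah₁ A₁ P₁ hrA₁ hA1e hP₁best
  have hsp2 : specNorm (P₂ - A₂) ≤ 2 * ε := hsp Ah₂ A₂ P₂ hrA₂ hA2e hP₂best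
  -- pseudoinverse perturbation bounds
  have hd1 : specNorm (P₁d - A₁d) ≤ 6 * (cA * cP * ε) := by
    have hw := pinv_perturb A₁ P₁ A₁d P₁d hA₁d hP₁d (by rw [hrA₁, hP₁r])
    have m2 : specNorm A₁d * specNorm P₁d * specNorm (P₁ - A₁) ≤ cA * cP * (2 * ε) :=
      mul3_le hcA1 hcP1 hsp1 (sn_nonneg _) (sn_nonneg _) (sn_nonneg _) hcA0 hcP0
    calc specNorm (P₁d - A₁d) ≤ 3 * (specNorm A₁d * specNorm P₁d * specNorm (P₁ - A₁)) := hw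
      _ ≤ 3 * (cA * cP * (2 * ε)) := by linarith
      _ = 6 * (cA * cP * ε) := by ring
  have hd2 : specNorm (P₂d - A₂d) ≤ 6 * (cA * cP * ε) := by
    have hw := pinv_perturb A₂ P₂ A₂d P₂d hA₂d hP₂d (by rw [hrA₂, hP₂r])
    have m2 : specNorm A₂d * specNorm P₂d * specNorm (P₂ - A₂) ≤ cA * cP * (2 * ε) :=
      mul3_le hcA2 hcP2 hsp2 (sn_nonneg _) (sn_nonneg _) (sn_nonneg _) hcA0 hcP0
    calc specNorm (P₂d - A₂d) ≤ 3 * (specNorm A₂d * specNorm P₂d * specNorm (P₂ - A₂)) := hw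
      _ ≤ 3 * (cA * cP * (2 * ε)) := by linarith
      _ = 6 * (cA * cP * ε) := by ring
  constructor
  · have hsplit : P₁d * Bh * P₂dᵀ - A₁d * B * A₂dᵀ =
        P₁d * (Bh - B) * P₂dᵀ + ((P₁d - A₁d) * B * P₂dᵀ + A₁d * B * (P₂d - A₂d)ᵀ) := by
      rw [Matrix.transpose_sub]; noncomm_ring
    have ht1 : frobNorm (P₁d * (Bh - B) * P₂dᵀ) ≤ cP * ε * cP := by
      refine le_trans (fn_mul3_le _ _ _) ?_
      refine mul3_le hcP1 hBe ?_ (sn_nonneg _) (fn_nonneg _) (sn_nonneg _) hcP0 hε0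
      rw [sn_transpose]; exact hcP2
    have ht2 : frobNorm ((P₁d - A₁d) * B * P₂dᵀ) ≤ 6 * (cA * cP * ε) * cp * cP := by
      refine le_trans (fn_mul3_le _ _ _) ?_
      refine mul3_le hd1 hBn ?_ (sn_nonneg _) (fn_nonneg _) (sn_nonneg _) ?_ hcp0
      · rw [sn_transpose]; exact hcP2
      · positivity
    have ht3 : frobNorm (A₁d * B * (P₂d - A₂d)ᵀ) ≤ cA * cp * (6 * (cA * cP * ε)) := by
      refine le_trans (fn_mul3_le _ _ _) ?_
      refine mul3_le hcA1 hBn ?_ (sn_nonneg _) (fn_nonneg _) (sn_nonneg _) hcA0 hcp0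
      rw [sn_transpose]; exact hd2
    calc frobNorm (P₁d * Bh * P₂dᵀ - A₁d * B * A₂dᵀ)
        = frobNorm (P₁d * (Bh - B) * P₂dᵀ + ((P₁d - A₁d) * B * P₂dᵀ + A₁d * B * (P₂d - A₂d)ᵀ)) := by
          rw [← hsplit]
      _ ≤ frobNorm (P₁d * (Bh - B) * P₂dᵀ) +
          frobNorm ((P₁d - A₁d) * B * P₂dᵀ + A₁d * B * (P₂d - A₂d)ᵀ) := fn_add_le _ _
      _ ≤ frobNorm (P₁d * (Bh - B) * P₂dᵀ) +
          (frobNorm ((P₁d - A₁d) * B * P₂dᵀ) + frobNorm (A₁d * B * (P₂d - A₂d)ᵀ)) :=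
          add_le_add_right (fn_add_le _ _) _
      _ ≤ cP * ε * cP + (6 * (cA * cP * ε) * cp * cP + cA * cp * (6 * (cA * cP * ε))) := by
          linarith
      _ = (cP ^ 2 + 6 * cA * cP ^ 2 * cp + 6 * cA ^ 2 * cP * cp) * ε := by ring
  · refine le_trans (fn_mul3_le _ _ _) ?_
    have : specNorm A₁d * frobNorm B * specNorm A₂dᵀ ≤ cA * cp * cA := by
      refine mul3_le hcA1 hBn ?_ (sn_nonneg _) (fn_nonneg _) (sn_nonneg _) hcA0 hcp0
      rw [sn_transpose]; exact hcA2
    linarith [this, sq_nonneg cA]
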